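/- Let S ⊆ R be SRSs over Σ_A and let shift_rel(S,R) = (S', shift(R)) where S' = {L ℓ → D r | (ℓ → r) ∈ S}. Then S' is string terminating relative to shift(R) (i.e., →_{S'} is terminating relative to →_{shift(R)}) if and only if S is cycle terminating relative to R (i.e., ∘→_S is terminating relative to ∘→_R). -/

import Mathlib

namespace CycleRewriting

/-- A binary relation is terminating if there is no infinite reduction sequence. -/
def Terminating {beta : Type*} (r : beta → beta → Prop) : Prop :=
  ¬ ∃ f : ℕ → beta, ∀ n : ℕ, r (f n) (f (n + 1))

/-- `r₁` is terminating relative to `r₂` iff every infinite `r₂`-sequence contains only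
finitely many `r₁`-steps. -/
def RelTerminating {beta : Type*} (r₁ r₂ : beta → beta → Prop) : Prop :=
  ¬ ∃ f : ℕ → beta, (∀ n : ℕ, r₂ (f n) (f (n + 1))) ∧
      {n : ℕ | r₁ (f n) (f (n + 1))}.Infinite

/-- The string rewrite relation of an SRS `R`. -/
def Step {α : Type*} (R : Set (List α × List α)) (x y : List α) : Prop :=
  ∃ u v l r, (l, r) ∈ R ∧ x = u ++ l ++ v ∧ y = u ++ r ++ v

/-- The prefix rewrite relation of an SRS `R`. -/
def PrefixStep {α : Type*} (R : Set (List α × List α)) (x y : List α) : Prop :=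
  ∃ l r w, (l, r) ∈ R ∧ x = l ++ w ∧ y = r ++ w

/-- The rotation equivalence `u ~ v` iff `u = w₁w₂` and `v = w₂w₁`. -/
def Sim {α : Type*} (u v : List α) : Prop :=
  ∃ w₁ w₂, u = w₁ ++ w₂ ∧ v = w₂ ++ w₁

/-- The cycle rewrite relation of an SRS `R` (on representatives of `Sim`-classes):
`[u] ∘→_R [v]` iff there are a rule `(l, r) ∈ R` and `w` with `l ++ w ∈ [u]` and
`r ++ w ∈ [v]`. -/
def CycleStep {α : Type*} (R : Set (List α × List α)) (x y : List α) : Prop :=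
  ∃ l r w, (l, r) ∈ R ∧ Sim (l ++ w) x ∧ Sim (r ++ w) y

/-- The shift relation `↷`: move the first symbol of a string to its end. -/
def Rot {α : Type*} (u v : List α) : Prop :=
  ∃ a w, u = a :: w ∧ v = w ++ [a]

/-- `k`-fold composition of a relation. -/
def RelPow {beta : Type*} (r : beta → beta → Prop) : ℕ → beta → beta → Prop
  | 0 => Eq
  | n + 1 => Relation.Comp r (RelPow r n)

/-- `lenSRS R` is the maximal length of a left-hand side of a rule of `R`. -/
noncomputable def lenSRS {α : Type*} (R : Set (List α × List α)) : ℕ :=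
  sSup ((fun p : List α × List α => p.1.length) '' R)

/-- The alphabet of `shift R`: the original alphabet `Σ_A`, two fresh copies `Σ_B`,
`Σ_C`, and the fresh symbols `B`, `E`, `W`, `V`, `M`, `L`, `R`, `D`. -/
inductive ShiftSym (α : Type*) where
  | ca : α → ShiftSym α          -- Σ_A
  | cb : α → ShiftSym α          -- Σ_B
  | cc : α → ShiftSym α          -- Σ_C
  | symB : ShiftSym α
  | symE : ShiftSym α
  | symW : ShiftSym α
  | symV : ShiftSym α
  | symM : ShiftSym α
  | symL : ShiftSym α
  | symR : ShiftSym α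
  | symD : ShiftSym α

open ShiftSym in
/-- The transformation `shift`, with `N = max (0, lenSRS R - 1)`. -/
noncomputable def shiftSRS {α : Type*} (R : Set (List α × List α)) :
    Set (List (ShiftSym α) × List (ShiftSym α)) :=
  { p | p = ([symB], symW :: List.replicate (lenSRS R - 1) symM ++ [symV]) ∨  -- shiftA
        p = ([symM], []) ∨                                                    -- shiftB
        (∃ a : α, p = ([symM, symV, ca a], [symV, cb a])) ∨                   -- shiftC
        (∃ a b : α, p = ([cb b, ca a], [ca a, cb b])) ∨                       -- shiftD
        (∃ b : α, p = ([cb b, symE], [ca b, symE])) ∨                         -- shiftE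
        p = ([symW, symV], [symR, symL]) ∨                                    -- shiftF
        (∃ a : α, p = ([symL, ca a], [cc a, symL])) ∨                         -- shiftG
        (∃ l r, (l, r) ∈ R ∧ p = (symL :: l.map ca, symD :: r.map ca)) ∨      -- shiftH
        (∃ c : α, p = ([cc c, symD], [symD, ca c])) ∨                         -- shiftI
        p = ([symR, symD], [symB]) }                                          -- shiftJ

/-! ### Section 1: basic lemmas on `Sim`, `CycleStep`, `Step` -/

theorem Sim.refl {α : Type*} (u : List α) : Sim u u := ⟨u, [], by simp, by simp⟩

theorem Sim.symm {α : Type*} {u v : List α} (h : Sim u v) : Sim v u := by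
  obtain ⟨w₁, w₂, h1, h2⟩ := h; exact ⟨w₂, w₁, h2, h1⟩

theorem sim_iff_isRotated {α : Type*} {u v : List α} : Sim u v ↔ u.IsRotated v := by
  constructor
  · rintro ⟨w₁, w₂, rfl, rfl⟩
    refine ⟨w₁.length, ?_⟩
    rw [List.rotate_eq_drop_append_take (by simp)]
    simp
  · rintro ⟨n, rfl⟩
    rcases eq_or_ne u [] with rfl | hu
    · exact ⟨[], [], by simp, by simp⟩
    refine ⟨u.take (n % u.length), u.drop (n % u.length), (List.take_append_drop _ _).symm, ?_⟩
    rw [← List.rotate_mod, List.rotate_eq_drop_append_take (le_of_lt (Nat.mod_lt _ (by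
      simpa [List.length_pos_iff] using hu)))]

theorem Sim.trans {α : Type*} {u v w : List α} (h1 : Sim u v) (h2 : Sim v w) : Sim u w := by
  rw [sim_iff_isRotated] at *; exact h1.trans h2

theorem CycleStep.sim_right {α : Type*} {T : Set (List α × List α)} {x y y' : List α}
    (h : CycleStep T x y) (h' : Sim y y') : CycleStep T x y' := by
  obtain ⟨l, r, w, hm, h1, h2⟩ := h; exact ⟨l, r, w, hm, h1, h2.trans h'⟩

theorem CycleStep.sim_left {α : Type*} {T : Set (List α × List α)} {x x' y : List α}
    (h : CycleStep T x y) (h' : Sim x x') : CycleStep T x' y := by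
  obtain ⟨l, r, w, hm, h1, h2⟩ := h; exact ⟨l, r, w, hm, h1.trans h', h2⟩

theorem CycleStep.mono {α : Type*} {T T' : Set (List α × List α)} (hT : T ⊆ T')
    {x y : List α} (h : CycleStep T x y) : CycleStep T' x y := by
  obtain ⟨l, r, w, hm, h1, h2⟩ := h; exact ⟨l, r, w, hT hm, h1, h2⟩

theorem Step.mono {α : Type*} {T T' : Set (List α × List α)} (hT : T ⊆ T')
    {x y : List α} (h : Step T x y) : Step T' x y := by
  obtain ⟨u, v, l, r, hm, h1, h2⟩ := h; exact ⟨u, v, l, r, hT hm, h1, h2⟩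

theorem step_context {α : Type*} {T : Set (List α × List α)} {x y : List α}
    (a b : List α) (h : Step T x y) : Step T (a ++ x ++ b) (a ++ y ++ b) := by
  obtain ⟨u, v, l, r, hm, rfl, rfl⟩ := h
  exact ⟨a ++ u, v ++ b, l, r, hm, by simp, by simp⟩

/-- infinite subsets of ℕ: unboundedness characterization -/
theorem nat_infinite_iff {P : ℕ → Prop} :
    {n | P n}.Infinite ↔ ∀ N, ∃ n, N ≤ n ∧ P n := by
  constructor
  · intro h N
    obtain ⟨n, hn, hn2⟩ := h.exists_gt N
    exact ⟨n, le_of_lt hn2, hn⟩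
  · intro h
    apply Set.infinite_of_forall_exists_gt
    intro a
    obtain ⟨n, hn, hp⟩ := h (a+1)
    exact ⟨n, hp, by omega⟩
/-! ### Section 2: symbol classes, zones, decode, taint -/

namespace ShiftSym
variable {α : Type*}

/-- tokens: the persistent symbols `B`,`W`,`R`,`E`. -/
def isTok : ShiftSym α → Bool
  | symB => true | symW => true | symR => true | symE => true | _ => false

/-- letters: the three copies of the original alphabet. -/
def isLetter : ShiftSym α → Bool
  | ca _ => true | cb _ => true | cc _ => true | _ => false

def isM : ShiftSym α → Bool
  | symM => true | _ => false

/-- decode of a-symbols and c-symbols -/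
def decA : ShiftSym α → Option α
  | ca a => some a | cc a => some a | _ => none

/-- decode of b-symbols -/
def decB : ShiftSym α → Option α
  | cb a => some a | _ => none

@[simp] theorem isTok_ca (a : α) : isTok (ca a) = false := rfl
@[simp] theorem isTok_cb (a : α) : isTok (cb a) = false := rfl
@[simp] theorem isTok_cc (a : α) : isTok (cc a) = false := rfl
@[simp] theorem isTok_symM : isTok (symM : ShiftSym α) = false := rfl
@[simp] theorem isTok_symV : isTok (symV : ShiftSym α) = false := rfl
@[simp] theorem isTok_symL : isTok (symL : ShiftSym α) = false := rfl
@[simp] theorem isTok_symD : isTok (symD : ShiftSym α) = false := rfl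
@[simp] theorem isTok_symB : isTok (symB : ShiftSym α) = true := rfl
@[simp] theorem isTok_symW : isTok (symW : ShiftSym α) = true := rfl
@[simp] theorem isTok_symR : isTok (symR : ShiftSym α) = true := rfl
@[simp] theorem isTok_symE : isTok (symE : ShiftSym α) = true := rfl

@[simp] theorem isLetter_ca (a : α) : isLetter (ca a) = true := rfl
@[simp] theorem isLetter_cb (a : α) : isLetter (cb a) = true := rfl
@[simp] theorem isLetter_cc (a : α) : isLetter (cc a) = true := rfl
@[simp] theorem isLetter_symM : isLetter (symM : ShiftSym α) = false := rfl
@[simp] theorem isLetter_symV : isLetter (symV : ShiftSym α) = false := rfl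
@[simp] theorem isLetter_symL : isLetter (symL : ShiftSym α) = false := rfl
@[simp] theorem isLetter_symD : isLetter (symD : ShiftSym α) = false := rfl

@[simp] theorem isM_ca (a : α) : isM (ca a) = false := rfl
@[simp] theorem isM_cb (a : α) : isM (cb a) = false := rfl
@[simp] theorem isM_cc (a : α) : isM (cc a) = false := rfl
@[simp] theorem isM_symM : isM (symM : ShiftSym α) = true := rfl
@[simp] theorem isM_symV : isM (symV : ShiftSym α) = false := rfl
@[simp] theorem isM_symL : isM (symL : ShiftSym α) = false := rfl
@[simp] theorem isM_symD : isM (symD : ShiftSym α) = false := rfl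

@[simp] theorem decA_ca (a : α) : decA (ca a) = some a := rfl
@[simp] theorem decA_cb (a : α) : decA (cb a) = none := rfl
@[simp] theorem decA_cc (a : α) : decA (cc a) = some a := rfl
@[simp] theorem decA_symM : decA (symM : ShiftSym α) = none := rfl
@[simp] theorem decA_symV : decA (symV : ShiftSym α) = none := rfl
@[simp] theorem decA_symL : decA (symL : ShiftSym α) = none := rfl
@[simp] theorem decA_symD : decA (symD : ShiftSym α) = none := rfl

@[simp] theorem decB_ca (a : α) : decB (ca a) = none := rfl
@[simp] theorem decB_cb (a : α) : decB (cb a) = some a := rfl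
@[simp] theorem decB_cc (a : α) : decB (cc a) = none := rfl
@[simp] theorem decB_symM : decB (symM : ShiftSym α) = none := rfl
@[simp] theorem decB_symV : decB (symV : ShiftSym α) = none := rfl
@[simp] theorem decB_symL : decB (symL : ShiftSym α) = none := rfl
@[simp] theorem decB_symD : decB (symD : ShiftSym α) = none := rfl

end ShiftSym

open ShiftSym

variable {α : Type*}

/-- split a string into zones between tokens -/
def zones : List (ShiftSym α) → List (List (ShiftSym α))
  | [] => [[]]
  | x :: t =>
    if isTok x then [] :: zones t
    else
      match zones t with
      | [] => [[x]]
      | z :: zs => (x :: z) :: zs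

theorem zones_ne_nil (s : List (ShiftSym α)) : zones s ≠ [] := by
  cases s with
  | nil => simp [zones]
  | cons x t =>
    by_cases h : isTok x
    · simp [zones, h]
    · simp only [zones, h]
      rcases zones t with _ | ⟨z, zs⟩ <;> simp

@[simp] theorem zones_nil : zones ([] : List (ShiftSym α)) = [[]] := rfl

theorem zones_cons_tok {x : ShiftSym α} (hx : isTok x = true) (t : List (ShiftSym α)) :
    zones (x :: t) = [] :: zones t := by simp [zones, hx]

theorem zones_cons_nontok {x : ShiftSym α} (hx : isTok x = false) (t : List (ShiftSym α)) :
    zones (x :: t) = (x :: (zones t).headI) :: (zones t).tail := by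
  simp only [zones, hx]
  rcases h : zones t with _ | ⟨z, zs⟩
  · exact absurd h (zones_ne_nil t)
  · simp

/-- the fundamental append lemma for `zones` -/
theorem zones_append {u : List (ShiftSym α)} {Z₁ : List (List (ShiftSym α))}
    {z : List (ShiftSym α)} (hu : zones u = Z₁ ++ [z]) (v : List (ShiftSym α)) :
    zones (u ++ v) = Z₁ ++ (z ++ (zones v).headI) :: (zones v).tail := by
  induction u generalizing Z₁ z with
  | nil =>
    simp only [zones_nil] at hu
    have : Z₁ = [] ∧ z = [] := by
      rcases Z₁ with _ | ⟨a, Z⟩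
      · simpa using hu.symm
      · exfalso
        rcases Z with _ | ⟨b, Z'⟩ <;> simp at hu
    obtain ⟨rfl, rfl⟩ := this
    rcases hz : zones v with _ | ⟨a, t⟩
    · exact absurd hz (zones_ne_nil v)
    · simpa using hz
  | cons x u ih =>
    cases hx : isTok x with
    | true =>
      rw [zones_cons_tok hx] at hu
      rcases Z₁ with _ | ⟨a, Z⟩
      · exfalso
        simp at hu
        exact (zones_ne_nil u) hu.2.symm.symm
      · simp at hu
        obtain ⟨rfl, hu⟩ := hu
        rw [List.cons_append, zones_cons_tok hx, ih hu]
        simp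
    | false =>
      rw [zones_cons_nontok hx] at hu
      rcases h : zones u with _ | ⟨z₀, zs₀⟩
      · exact absurd h (zones_ne_nil u)
      rw [h] at hu
      simp only [List.headI, List.tail] at hu
      rcases zs₀ with _ | ⟨z₁, zs₁⟩
      · -- zones u = [z₀], so Z₁ = [], z = x :: z₀
        have : Z₁ = [] ∧ z = x :: z₀ := by
          rcases Z₁ with _ | ⟨a, Z⟩
          · simpa using hu.symm
          · exfalso
            rcases Z with _ | ⟨b, Z'⟩ <;> simp at hu
        obtain ⟨rfl, rfl⟩ := this
        rw [List.cons_append, zones_cons_nontok hx, ih (Z₁ := []) (by simpa using h)]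
        simp
      · -- zones u = z₀ :: z₁ :: zs₁,  hu : (x::z₀) :: z₁ :: zs₁ = Z₁ ++ [z]
        rcases Z₁ with _ | ⟨a, Z⟩
        · exfalso
          simp at hu
        · simp only [List.cons_append, List.cons.injEq] at hu
          obtain ⟨rfl, hu⟩ := hu
          have h' : zones u = (z₀ :: Z) ++ [z] := by rw [h, hu]; simp
          rw [List.cons_append, zones_cons_nontok hx, ih h']
          simp
/-! ### Section 3: derived zone-splitting forms, decode, taint -/

def TokFree (w : List (ShiftSym α)) : Prop := ∀ x ∈ w, isTok x = false

theorem zones_tokFree {w : List (ShiftSym α)} (h : TokFree w) : zones w = [w] := by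
  induction w with
  | nil => rfl
  | cons x t ih =>
    rw [zones_cons_nontok (h x (by simp)), ih (fun y hy => h y (by simp [hy]))]
    simp

theorem exists_snoc_zones (u : List (ShiftSym α)) :
    ∃ Z₁ z₀, zones u = Z₁ ++ [z₀] := by
  rcases List.eq_nil_or_concat (zones u) with h | ⟨L, b, h⟩
  · exact absurd h (zones_ne_nil u)
  · exact ⟨L, b, by simpa [List.concat_eq_append] using h⟩

/-- form 1 : token-free infix -/
theorem zones_form1 {u : List (ShiftSym α)} {Z₁ : List (List (ShiftSym α))}
    {z₀ w v : List (ShiftSym α)} (hu : zones u = Z₁ ++ [z₀]) (hw : TokFree w) :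
    zones (u ++ w ++ v) = Z₁ ++ (z₀ ++ w ++ (zones v).headI) :: (zones v).tail := by
  have h2 : zones w = [] ++ [w] := by simpa using zones_tokFree hw
  have h3 : zones (w ++ v) = (w ++ (zones v).headI) :: (zones v).tail := by
    simpa using zones_append h2 v
  rw [List.append_assoc, zones_append hu, h3]
  simp

/-- form 2 : token then token-free -/
theorem zones_form2 {u : List (ShiftSym α)} {Z₁ : List (List (ShiftSym α))}
    {z₀ w v : List (ShiftSym α)} {t : ShiftSym α}
    (hu : zones u = Z₁ ++ [z₀]) (ht : isTok t = true) (hw : TokFree w) :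
    zones (u ++ (t :: w) ++ v) = Z₁ ++ z₀ :: (w ++ (zones v).headI) :: (zones v).tail := by
  have h2 : zones w = [] ++ [w] := by simpa using zones_tokFree hw
  have h3 : zones (t :: w ++ v) = [] :: (w ++ (zones v).headI) :: (zones v).tail := by
    rw [List.cons_append, zones_cons_tok ht]
    simpa using zones_append h2 v
  rw [List.append_assoc, zones_append hu, h3]
  simp

/-- form 3 : token-free then token -/
theorem zones_form3 {u : List (ShiftSym α)} {Z₁ : List (List (ShiftSym α))}
    {z₀ w v : List (ShiftSym α)} {t : ShiftSym α}
    (hu : zones u = Z₁ ++ [z₀]) (hw : TokFree w) (ht : isTok t = true) :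
    zones (u ++ (w ++ [t]) ++ v) = Z₁ ++ (z₀ ++ w) :: zones v := by
  have : u ++ (w ++ [t]) ++ v = (u ++ w) ++ (t :: v) := by simp
  rw [this]
  have hu' : zones (u ++ w) = Z₁ ++ [z₀ ++ w] := by
    have := zones_form1 (v := []) hu hw
    simpa using this
  rw [zones_append hu' (t :: v), zones_cons_tok ht]
  simp

/-- decode of a zone into a cyclic word -/
def dec (z : List (ShiftSym α)) : List α :=
  z.filterMap decA ++ (z.filterMap decB).reverse

theorem dec_append (p q : List (ShiftSym α)) :
    dec (p ++ q) = p.filterMap decA ++ q.filterMap decA ++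
      ((q.filterMap decB).reverse ++ (p.filterMap decB).reverse) := by
  simp [dec, List.filterMap_append]

/-- letter-free lists decode to nothing -/
theorem filterMap_decA_eq_nil {p : List (ShiftSym α)} (h : ∀ x ∈ p, isLetter x = false) :
    p.filterMap decA = [] := by
  induction p with
  | nil => rfl
  | cons x t ih =>
    have hx := h x (by simp)
    have ht := ih (fun y hy => h y (by simp [hy]))
    cases x <;> simp_all [decA]

theorem filterMap_decB_eq_nil {p : List (ShiftSym α)} (h : ∀ x ∈ p, isLetter x = false) :
    p.filterMap decB = [] := by
  induction p with
  | nil => rfl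
  | cons x t ih =>
    have hx := h x (by simp)
    have ht := ih (fun y hy => h y (by simp [hy]))
    cases x <;> simp_all [decB]

@[simp] theorem filterMap_decA_map_ca (l : List α) :
    (l.map ca).filterMap decA = l := by
  induction l with
  | nil => rfl
  | cons a t ih => simp [ih]

@[simp] theorem filterMap_decB_map_ca (l : List α) :
    (l.map ca).filterMap decB = [] := by
  induction l with
  | nil => rfl
  | cons a t ih => simp [ih]

@[simp] theorem filterMap_decA_map_cc (l : List α) :
    (l.map cc).filterMap decA = l := by
  induction l with
  | nil => rfl
  | cons a t ih => simp [ih]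

@[simp] theorem filterMap_decB_map_cc (l : List α) :
    (l.map cc).filterMap decB = [] := by
  induction l with
  | nil => rfl
  | cons a t ih => simp [ih]

/-- taint count: number of M's preceded by some letter -/
def taintGo : Bool → List (ShiftSym α) → ℕ
  | _, [] => 0
  | s, x :: t => (if isM x && s then 1 else 0) + taintGo (s || isLetter x) t

def taint (z : List (ShiftSym α)) : ℕ := taintGo false z

def hasLetter (p : List (ShiftSym α)) : Bool := p.any isLetter

@[simp] theorem taintGo_nil (s : Bool) : taintGo s ([] : List (ShiftSym α)) = 0 := rfl
theorem taintGo_cons (s : Bool) (x : ShiftSym α) (t : List (ShiftSym α)) :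
    taintGo s (x :: t) = (if isM x && s then 1 else 0) + taintGo (s || isLetter x) t := rfl

theorem taintGo_append (s : Bool) (p q : List (ShiftSym α)) :
    taintGo s (p ++ q) = taintGo s p + taintGo (s || hasLetter p) q := by
  induction p generalizing s with
  | nil => simp [hasLetter]
  | cons x t ih =>
    simp only [List.cons_append, taintGo_cons, ih]
    have : (s || hasLetter (x :: t)) = ((s || isLetter x) || hasLetter t) := by
      simp [hasLetter, Bool.or_assoc]
    rw [this]
    omega

theorem taintGo_mono {s s' : Bool} (h : s = true → s' = true) (t : List (ShiftSym α)) :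
    taintGo s t ≤ taintGo s' t := by
  induction t generalizing s s' with
  | nil => simp
  | cons x r ih =>
    simp only [taintGo_cons]
    have h2 : (s || isLetter x) = true → (s' || isLetter x) = true := by
      intro hx
      rcases Bool.or_eq_true_iff.mp hx with hx | hx
      · simp [h hx]
      · simp [hx]
    have := ih h2
    have h3 : (if isM x && s then 1 else 0) ≤ (if isM x && s' then 1 else 0) := by
      by_cases hm : isM x <;> by_cases hs : s <;> simp_all
    omega
/-! ### Section 4: helpers for the master lemma -/

def Cyc1 (l r d d' : List α) : Prop := ∃ w, Sim (l ++ w) d ∧ Sim (r ++ w) d'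

theorem noLetter_of_hasLetter_false {p : List (ShiftSym α)} (h : hasLetter p = false) :
    ∀ x ∈ p, isLetter x = false := by
  simpa [hasLetter] using h

theorem taintGo_false_of_noLetter {p : List (ShiftSym α)}
    (h : ∀ x ∈ p, isLetter x = false) : taintGo false p = 0 := by
  induction p with
  | nil => rfl
  | cons x t ih =>
    rw [taintGo_cons, h x (by simp), Bool.or_false]
    simp [ih (fun y hy => h y (by simp [hy]))]

theorem hasLetter_eq_false_of_noLetter {p : List (ShiftSym α)}
    (h : ∀ x ∈ p, isLetter x = false) : hasLetter p = false := by
  simpa [hasLetter] using h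

@[simp] theorem noLetter_replicate_symM (n : ℕ) :
    ∀ x ∈ (List.replicate n (symM : ShiftSym α)), isLetter x = false := by
  intro x hx
  rw [List.eq_of_mem_replicate hx]
  rfl

@[simp] theorem filterMap_decA_replicate (n : ℕ) :
    (List.replicate n (symM : ShiftSym α)).filterMap decA = [] := by
  induction n with
  | zero => rfl
  | succ n ih => simpa [List.replicate_succ]

@[simp] theorem filterMap_decB_replicate (n : ℕ) :
    (List.replicate n (symM : ShiftSym α)).filterMap decB = [] := by
  induction n with
  | zero => rfl
  | succ n ih => simpa [List.replicate_succ]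

theorem tokFree_map_ca (l : List α) : TokFree (l.map ca) := by
  intro x hx
  obtain ⟨a, _, rfl⟩ := List.mem_map.mp hx
  rfl

theorem tokFree_cons {x : ShiftSym α} {t : List (ShiftSym α)}
    (hx : isTok x = false) (ht : TokFree t) : TokFree (x :: t) := by
  intro y hy
  rcases List.mem_cons.mp hy with rfl | hy
  · exact hx
  · exact ht y hy

theorem tokFree_nil : TokFree ([] : List (ShiftSym α)) := by intro y hy; simp at hy

theorem tokFree_replicate_symM (n : ℕ) : TokFree (List.replicate n (symM : ShiftSym α)) := by
  intro x hx
  rw [List.eq_of_mem_replicate hx]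
  rfl

theorem tokFree_append {p q : List (ShiftSym α)} (hp : TokFree p) (hq : TokFree q) :
    TokFree (p ++ q) := by
  intro x hx
  rcases List.mem_append.mp hx with h | h
  · exact hp x h
  · exact hq x h

theorem hasLetter_map_ca_cons (a : α) (l : List α) :
    hasLetter ((a :: l).map ca) = true := by simp [hasLetter]

theorem taintGo_noM {s : Bool} {p : List (ShiftSym α)} (h : ∀ x ∈ p, isM x = false) :
    taintGo s p = 0 := by
  induction p generalizing s with
  | nil => rfl
  | cons x t ih =>
    rw [taintGo_cons, h x (by simp)]
    simp [ih (fun y hy => h y (by simp [hy]))]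

theorem noM_map_ca (l : List α) : ∀ x ∈ l.map ca, isM x = false := by
  intro x hx
  obtain ⟨a, _, rfl⟩ := List.mem_map.mp hx
  rfl

@[simp] theorem filterMap_decA_comp_ca (l : List α) : l.filterMap (decA ∘ ca) = l := by
  induction l with
  | nil => rfl
  | cons a t ih => simp [ih, Function.comp]

@[simp] theorem filterMap_decB_comp_ca (l : List α) : l.filterMap (decB ∘ ca) = [] := by
  induction l with
  | nil => rfl
  | cons a t ih => simp [ih, Function.comp]

@[simp] theorem filterMap_decA_comp_cc (l : List α) : l.filterMap (decA ∘ cc) = l := by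
  induction l with
  | nil => rfl
  | cons a t ih => simp [ih, Function.comp]

@[simp] theorem filterMap_decB_comp_cc (l : List α) : l.filterMap (decB ∘ cc) = [] := by
  induction l with
  | nil => rfl
  | cons a t ih => simp [ih, Function.comp]
/-! ### Section 5: the master lemmas -/

/-- master lemma for H-steps -/
theorem master_H {l r : List α} (hl : l ≠ []) (u v : List (ShiftSym α)) :
    ∃ Zl z z' Zr,
      zones (u ++ (symL :: l.map ca) ++ v) = Zl ++ z :: Zr ∧
      zones (u ++ (symD :: r.map ca) ++ v) = Zl ++ z' :: Zr ∧
      taint z' ≤ taint z ∧ Cyc1 l r (dec z) (dec z') := by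
  obtain ⟨Z₁, z₀, hu⟩ := exists_snoc_zones u
  have hwl : TokFree (symL :: l.map ca) := tokFree_cons rfl (tokFree_map_ca l)
  have hwr : TokFree (symD :: r.map ca) := tokFree_cons rfl (tokFree_map_ca r)
  set q := (zones v).headI with hq
  refine ⟨Z₁, z₀ ++ (symL :: l.map ca) ++ q, z₀ ++ (symD :: r.map ca) ++ q, (zones v).tail,
    zones_form1 hu hwl, zones_form1 hu hwr, ?_, ?_⟩
  · -- taint
    have h1 : taint (z₀ ++ (symL :: l.map ca) ++ q)
        = taintGo false z₀ + taintGo true q := by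
      rw [List.append_assoc, taint, taintGo_append, taintGo_append]
      have : taintGo (false || hasLetter z₀) (symL :: l.map ca) = 0 :=
        taintGo_noM (by intro x hx; rcases List.mem_cons.mp hx with rfl | hx
                        · rfl
                        · exact noM_map_ca l x hx)
      rw [this]
      have hl2 : hasLetter (symL :: l.map ca) = true := by
        rcases l with _ | ⟨a, t⟩
        · exact absurd rfl hl
        · simp [hasLetter]
      rw [hl2]
      simp
    have h2 : taint (z₀ ++ (symD :: r.map ca) ++ q)
        ≤ taintGo false z₀ + taintGo true q := by
      rw [List.append_assoc, taint, taintGo_append, taintGo_append]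
      have : taintGo (false || hasLetter z₀) (symD :: r.map ca) = 0 :=
        taintGo_noM (by intro x hx; rcases List.mem_cons.mp hx with rfl | hx
                        · rfl
                        · exact noM_map_ca r x hx)
      rw [this]
      have := taintGo_mono (s := (false || hasLetter z₀) || hasLetter (symD :: r.map ca))
        (s' := true) (by intro; rfl) q
      omega
    omega
  · -- Cyc1
    set Az := z₀.filterMap decA
    set Bz := (z₀.filterMap decB).reverse
    set Aq := q.filterMap decA
    set Bq := (q.filterMap decB).reverse
    refine ⟨Aq ++ Bq ++ Bz ++ Az, ⟨l ++ Aq ++ Bq ++ Bz, Az, by simp, ?_⟩,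
      ⟨r ++ Aq ++ Bq ++ Bz, Az, by simp, ?_⟩⟩
    · show dec _ = _
      simp [dec, List.filterMap_append, List.filterMap_cons, Az, Bz, Aq, Bq]
    · show dec _ = _
      simp [dec, List.filterMap_append, List.filterMap_cons, Az, Bz, Aq, Bq]
/-! ### Section 6: the general master lemma -/

theorem noLetter_MV (N : ℕ) :
    ∀ x ∈ (List.replicate N (symM : ShiftSym α) ++ [symV]), isLetter x = false := by
  intro x hx
  rcases List.mem_append.mp hx with h | h
  · rw [List.eq_of_mem_replicate h]; rfl
  · simp at h; rw [h]; rfl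

theorem tokFree_MV (N : ℕ) : TokFree (List.replicate N (symM : ShiftSym α) ++ [symV]) :=
  tokFree_append (tokFree_replicate_symM N) (tokFree_cons rfl tokFree_nil)

theorem master {R : Set (List α × List α)} (hne : ∀ p ∈ R, p.1 ≠ [])
    {lhs rhs : List (ShiftSym α)} (hm : (lhs, rhs) ∈ shiftSRS R) (u v : List (ShiftSym α)) :
    ∃ Zl z z' Zr,
      zones (u ++ lhs ++ v) = Zl ++ z :: Zr ∧
      zones (u ++ rhs ++ v) = Zl ++ z' :: Zr ∧
      taint z' ≤ taint z ∧
      (Sim (dec z) (dec z') ∨ taint z' < taint z ∨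
        ∃ l r, (l, r) ∈ R ∧ Cyc1 l r (dec z) (dec z')) := by
  obtain ⟨Z₁, z₀, hu⟩ := exists_snoc_zones u
  set q : List (ShiftSym α) := (zones v).headI with hq
  set Zr0 : List (List (ShiftSym α)) := (zones v).tail with hZr0
  simp only [shiftSRS, Set.mem_setOf_eq, Prod.mk.injEq] at hm
  rcases hm with ⟨h1, h2⟩ | ⟨h1, h2⟩ | ⟨a, h1, h2⟩ | ⟨a, b, h1, h2⟩ | ⟨b, h1, h2⟩ |
    ⟨h1, h2⟩ | ⟨a, h1, h2⟩ | ⟨l, r, hlr, h1, h2⟩ | ⟨c, h1, h2⟩ | ⟨h1, h2⟩ <;> subst h1 <;> subst h2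
  · -- shiftA : B → W M^N V
    refine ⟨Z₁ ++ [z₀], q, (List.replicate (lenSRS R - 1) symM ++ [symV]) ++ q, Zr0, ?_, ?_, ?_, ?_⟩
    · have := zones_form2 (t := symB) (w := []) (v := v) hu rfl tokFree_nil
      simpa using this
    · have := zones_form2 (t := symW) (w := List.replicate (lenSRS R - 1) symM ++ [symV]) (v := v)
        hu rfl (tokFree_MV _)
      simpa [List.append_assoc] using this
    · rw [taint, taintGo_append,
        taintGo_false_of_noLetter (noLetter_MV _),
        hasLetter_eq_false_of_noLetter (noLetter_MV _)]
      simp [taint]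
    · left
      have : dec ((List.replicate (lenSRS R - 1) symM ++ [symV]) ++ q) = dec q := by
        simp [dec, List.filterMap_append, List.filterMap_cons]
      rw [this]
      exact Sim.refl _
  · -- shiftB : M → ε
    refine ⟨Z₁, z₀ ++ [symM] ++ q, z₀ ++ q, Zr0, zones_form1 hu (by intro x hx; simp at hx; subst hx; rfl), ?_, ?_, ?_⟩
    · have := zones_form1 (w := []) (v := v) hu tokFree_nil
      simpa using this
    · simp only [taint, List.append_assoc, taintGo_append, taintGo_cons, taintGo_nil, hasLetter,
        List.any_cons, List.any_nil]
      cases hz : z₀.any isLetter <;> simp [hz] <;> omega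
    · left
      have : dec (z₀ ++ [symM] ++ q) = dec (z₀ ++ q) := by
        simp [dec, List.filterMap_append, List.filterMap_cons]
      rw [this]; exact Sim.refl _
  · -- shiftC : M V a → V a^B
    have hfl : TokFree [symM, symV, ca a] := by intro x hx; fin_cases hx <;> rfl
    have hfr : TokFree [symV, cb a] := by intro x hx; fin_cases hx <;> rfl
    refine ⟨Z₁, z₀ ++ [symM, symV, ca a] ++ q, z₀ ++ [symV, cb a] ++ q, Zr0,
      zones_form1 hu hfl, zones_form1 hu hfr, ?_, ?_⟩
    · simp only [taint, List.append_assoc, taintGo_append, taintGo_cons, taintGo_nil, hasLetter,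
        List.any_cons, List.any_nil]
      cases hz : z₀.any isLetter <;> simp [hz] <;> omega
    · by_cases hL : hasLetter z₀ = true
      · right; left
        simp only [taint, List.append_assoc, taintGo_append, taintGo_cons, taintGo_nil, hasLetter,
          List.any_cons, List.any_nil]
        simp only [hasLetter] at hL
        simp [hL]
      · left
        have hnl := noLetter_of_hasLetter_false (by simpa using hL)
        have e1 : dec (z₀ ++ [symM, symV, ca a] ++ q)
            = a :: (q.filterMap decA ++ (q.filterMap decB).reverse) := by
          simp [dec, List.filterMap_append, List.filterMap_cons, filterMap_decA_eq_nil hnl, filterMap_decB_eq_nil hnl]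
        have e2 : dec (z₀ ++ [symV, cb a] ++ q)
            = (q.filterMap decA ++ (q.filterMap decB).reverse) ++ [a] := by
          simp [dec, List.filterMap_append, List.filterMap_cons, filterMap_decA_eq_nil hnl, filterMap_decB_eq_nil hnl]
        rw [e1, e2]
        exact ⟨[a], q.filterMap decA ++ (q.filterMap decB).reverse, by simp, rfl⟩
  · -- shiftD : b^B a → a b^B
    have hfl : TokFree [cb b, ca a] := by intro x hx; fin_cases hx <;> rfl
    have hfr : TokFree [ca a, cb b] := by intro x hx; fin_cases hx <;> rfl
    refine ⟨Z₁, z₀ ++ [cb b, ca a] ++ q, z₀ ++ [ca a, cb b] ++ q, Zr0,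
      zones_form1 hu hfl, zones_form1 hu hfr, ?_, ?_⟩
    · simp only [taint, List.append_assoc, taintGo_append, taintGo_cons, taintGo_nil, hasLetter,
        List.any_cons, List.any_nil]
      cases hz : z₀.any isLetter <;> simp [hz] <;> omega
    · left
      have : dec (z₀ ++ [cb b, ca a] ++ q) = dec (z₀ ++ [ca a, cb b] ++ q) := by
        simp [dec, List.filterMap_append, List.filterMap_cons]
      rw [this]; exact Sim.refl _
  · -- shiftE : b^B E → b^A E
    refine ⟨Z₁, z₀ ++ [cb b], z₀ ++ [ca b], zones v, ?_, ?_, ?_, ?_⟩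
    · have := zones_form3 (w := [cb b]) (t := symE) (v := v) hu
        (by intro x hx; simp at hx; subst hx; rfl) rfl
      simpa using this
    · have := zones_form3 (w := [ca b]) (t := symE) (v := v) hu
        (by intro x hx; simp at hx; subst hx; rfl) rfl
      simpa using this
    · simp only [taint, List.append_assoc, taintGo_append, taintGo_cons, taintGo_nil, hasLetter,
        List.any_cons, List.any_nil]
      cases hz : z₀.any isLetter <;> simp [hz] <;> omega
    · left
      have e1 : dec (z₀ ++ [cb b]) = z₀.filterMap decA ++ (b :: (z₀.filterMap decB).reverse) := by
        simp [dec, List.filterMap_append]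
      have e2 : dec (z₀ ++ [ca b]) = (z₀.filterMap decA ++ [b]) ++ (z₀.filterMap decB).reverse := by
        simp [dec, List.filterMap_append]
      rw [e1, e2]
      simp only [List.append_assoc, List.singleton_append]
      exact Sim.refl _
  · -- shiftF : W V → R L
    refine ⟨Z₁ ++ [z₀], symV :: q, symL :: q, Zr0, ?_, ?_, ?_, ?_⟩
    · have := zones_form2 (t := symW) (w := [symV]) (v := v) hu rfl
        (by intro x hx; simp at hx; subst hx; rfl)
      simpa using this
    · have := zones_form2 (t := symR) (w := [symL]) (v := v) hu rfl
        (by intro x hx; simp at hx; subst hx; rfl)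
      simpa using this
    · simp [taint, taintGo_cons]
    · left
      have : dec (symV :: q) = dec (symL :: q) := by simp [dec, List.filterMap_cons]
      rw [this]; exact Sim.refl _
  · -- shiftG : L a → a^C L
    have hfl : TokFree [symL, ca a] := by intro x hx; fin_cases hx <;> rfl
    have hfr : TokFree [cc a, symL] := by intro x hx; fin_cases hx <;> rfl
    refine ⟨Z₁, z₀ ++ [symL, ca a] ++ q, z₀ ++ [cc a, symL] ++ q, Zr0,
      zones_form1 hu hfl, zones_form1 hu hfr, ?_, ?_⟩
    · simp only [taint, List.append_assoc, taintGo_append, taintGo_cons, taintGo_nil, hasLetter,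
        List.any_cons, List.any_nil]
      cases hz : z₀.any isLetter <;> simp [hz] <;> omega
    · left
      have : dec (z₀ ++ [symL, ca a] ++ q) = dec (z₀ ++ [cc a, symL] ++ q) := by
        simp [dec, List.filterMap_append, List.filterMap_cons]
      rw [this]; exact Sim.refl _
  · -- shiftH : L ℓ → D r
    obtain ⟨Zl, z, z', Zr, e1, e2, e3, e4⟩ := master_H (hne (l, r) hlr) u v
    exact ⟨Zl, z, z', Zr, e1, e2, e3, Or.inr (Or.inr ⟨l, r, hlr, e4⟩)⟩
  · -- shiftI : c D → D c^A
    have hfl : TokFree [cc c, symD] := by intro x hx; fin_cases hx <;> rfl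
    have hfr : TokFree [symD, ca c] := by intro x hx; fin_cases hx <;> rfl
    refine ⟨Z₁, z₀ ++ [cc c, symD] ++ q, z₀ ++ [symD, ca c] ++ q, Zr0,
      zones_form1 hu hfl, zones_form1 hu hfr, ?_, ?_⟩
    · simp only [taint, List.append_assoc, taintGo_append, taintGo_cons, taintGo_nil, hasLetter,
        List.any_cons, List.any_nil]
      cases hz : z₀.any isLetter <;> simp [hz] <;> omega
    · left
      have : dec (z₀ ++ [cc c, symD] ++ q) = dec (z₀ ++ [symD, ca c] ++ q) := by
        simp [dec, List.filterMap_append, List.filterMap_cons]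
      rw [this]; exact Sim.refl _
  · -- shiftJ : R D → B
    refine ⟨Z₁ ++ [z₀], symD :: q, q, Zr0, ?_, ?_, ?_, ?_⟩
    · have := zones_form2 (t := symR) (w := [symD]) (v := v) hu rfl
        (by intro x hx; simp at hx; subst hx; rfl)
      simpa using this
    · have := zones_form2 (t := symB) (w := []) (v := v) hu rfl tokFree_nil
      simpa using this
    · simp [taint, taintGo_cons]
    · left
      have : dec (symD :: q) = dec q := by simp [dec, List.filterMap_cons]
      rw [this]; exact Sim.refl _
/-! ### Section 7: generic infinite-sequence machinery -/

theorem antitone_eventually_const (τ : ℕ → ℕ) (h : ∀ n, τ (n + 1) ≤ τ n) :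
    ∃ n₀, ∀ n, n₀ ≤ n → τ n = τ n₀ := by
  have hmono : ∀ a b, a ≤ b → τ b ≤ τ a := by
    intro a b hab
    induction b with
    | zero => simp_all
    | succ b ih =>
      rcases Nat.lt_or_ge a (b+1) with h' | h'
      · exact le_trans (h b) (ih (by omega))
      · have : a = b + 1 := by omega
        subst this; rfl
  have hne : (Set.range τ).Nonempty := ⟨τ 0, 0, rfl⟩
  obtain ⟨n₀, hn₀⟩ := Nat.sInf_mem hne
  refine ⟨n₀, fun n hn => ?_⟩
  have h1 : τ n ≤ τ n₀ := hmono _ _ hn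
  have h2 : sInf (Set.range τ) ≤ τ n := Nat.sInf_le ⟨n, rfl⟩
  omega

theorem pigeonhole_infinite (A : Set ℕ) (hA : A.Infinite) (j : ℕ → ℕ) (K : ℕ)
    (hj : ∀ n ∈ A, j n < K) : ∃ i, i < K ∧ {n | n ∈ A ∧ j n = i}.Infinite := by
  by_contra h
  push_neg at h
  have : A ⊆ ⋃ i ∈ Finset.range K, {n | n ∈ A ∧ j n = i} := by
    intro n hn
    simp only [Set.mem_iUnion]
    exact ⟨j n, by simpa using hj n hn, hn, rfl⟩
  have hfin : (⋃ i ∈ Finset.range K, {n | n ∈ A ∧ j n = i}).Finite := by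
    apply Set.Finite.biUnion (Finset.finite_toSet _)
    intro i hi
    exact h i (by simpa using hi)
  exact hA (hfin.subset this)

theorem extract_cycle_sequence {γ : Type*} (g : ℕ → γ) (C F : Set ℕ)
    (simR cyc cycS : γ → γ → Prop)
    (hcomp : ∀ x y z, cyc x y → simR y z → cyc x z)
    (hcompS : ∀ x y z, cycS x y → simR y z → cycS x z)
    (hsimrefl : ∀ x, simR x x)
    (hsimtrans : ∀ x y z, simR x y → simR y z → simR x z)
    (hstep : ∀ n, (n ∈ C → cyc (g n) (g (n+1))) ∧ (n ∉ C → simR (g n) (g (n+1))))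
    (hFC : F ⊆ C) (hF : F.Infinite)
    (hfl : ∀ n ∈ F, cycS (g n) (g (n+1))) :
    ∃ f : ℕ → γ, (∀ n, cyc (f n) (f (n+1))) ∧ {n | cycS (f n) (f (n+1))}.Infinite := by
  have hC : C.Infinite := hF.mono hFC
  have h0 : ∀ N : ℕ, ∃ n, N ≤ n ∧ n ∈ C := by
    intro N
    obtain ⟨n, hn, hgt⟩ := hC.exists_gt N
    exact ⟨n, le_of_lt hgt, hn⟩
  classical
  -- the enumeration of C
  let ν : ℕ → ℕ := fun k => Nat.rec (Nat.find (h0 0)) (fun _ prev => Nat.find (h0 (prev + 1))) k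
  have hν0 : ν 0 = Nat.find (h0 0) := rfl
  have hνs : ∀ k, ν (k + 1) = Nat.find (h0 (ν k + 1)) := fun k => rfl
  have hνC : ∀ k, ν k ∈ C := by
    intro k
    cases k with
    | zero => exact (Nat.find_spec (h0 0)).2
    | succ k => exact (Nat.find_spec (h0 (ν k + 1))).2
  have hνlt : ∀ k, ν k < ν (k + 1) := by
    intro k
    have := (Nat.find_spec (h0 (ν k + 1))).1
    rw [hνs k]; omega
  have hνmono : StrictMono ν := strictMono_nat_of_lt_succ hνlt
  have hgap : ∀ k m, ν k < m → m < ν (k + 1) → m ∉ C := by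
    intro k m h1 h2 hm
    have h2' : m < Nat.find (h0 (ν k + 1)) := by rw [← hνs k]; exact h2
    exact Nat.find_min (h0 (ν k + 1)) h2' ⟨by omega, hm⟩
  have hlow : ∀ m, m < ν 0 → m ∉ C := by
    intro m hm hmC
    have hm' : m < Nat.find (h0 0) := by rw [← hν0]; exact hm
    exact Nat.find_min (h0 0) hm' ⟨Nat.zero_le m, hmC⟩
  -- windows cover [ν 0, ∞)
  have hwin : ∀ m, ν 0 ≤ m → ∃ k, ν k ≤ m ∧ m < ν (k + 1) := by
    intro m hm
    induction m with
    | zero =>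
      refine ⟨0, by omega, ?_⟩
      have := hνlt 0
      omega
    | succ m ih =>
      rcases Nat.lt_or_ge (ν 0) (m + 1) with h' | h'
      · obtain ⟨k, hk1, hk2⟩ := ih (by omega)
        rcases Nat.lt_or_ge (m + 1) (ν (k + 1)) with h'' | h''
        · exact ⟨k, by omega, h''⟩
        · have : ν (k + 1) = m + 1 := by omega
          refine ⟨k + 1, by omega, ?_⟩
          have := hνlt (k + 1)
          omega
      · have : ν 0 = m + 1 := by omega
        refine ⟨0, by omega, ?_⟩
        have := hνlt 0
        omega
  have hcover : ∀ m, m ∈ C → ∃ k, ν k = m := by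
    intro m hm
    have h1 : ν 0 ≤ m := by
      by_contra h'
      exact (hlow m (by omega)) hm
    obtain ⟨k, hk1, hk2⟩ := hwin m h1
    rcases Nat.lt_or_ge (ν k) m with h' | h'
    · exact absurd hm (hgap k m h' hk2)
    · exact ⟨k, by omega⟩
  -- sim chains over gaps
  have hsimchain : ∀ a b, a ≤ b → (∀ m, a ≤ m → m < b → m ∉ C) → simR (g a) (g b) := by
    intro a b hab hgapab
    induction b with
    | zero =>
      have : a = 0 := by omega
      subst this; exact hsimrefl _
    | succ b ih =>
      rcases Nat.lt_or_ge a (b + 1) with h' | h'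
      · have h1 : simR (g a) (g b) := ih (by omega) (fun m hm1 hm2 => hgapab m hm1 (by omega))
        have h2 : simR (g b) (g (b + 1)) :=
          (hstep b).2 (hgapab b (by omega) (by omega))
        exact hsimtrans _ _ _ h1 h2
      · have : a = b + 1 := by omega
        subst this; exact hsimrefl _
  refine ⟨fun k => g (ν k), ?_, ?_⟩
  · intro k
    have h1 : cyc (g (ν k)) (g (ν k + 1)) := (hstep (ν k)).1 (hνC k)
    have h2 : simR (g (ν k + 1)) (g (ν (k + 1))) :=
      hsimchain _ _ (hνlt k) (fun m hm1 hm2 => hgap k m (by omega) hm2)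
    exact hcomp _ _ _ h1 h2
  · rw [nat_infinite_iff]
    intro K
    obtain ⟨m, hmF, hmgt⟩ := hF.exists_gt (ν K)
    obtain ⟨k, hk⟩ := hcover m (hFC hmF)
    refine ⟨k, ?_, ?_⟩
    · by_contra h'
      have := hνmono.lt_iff_lt.mpr (show k < K by omega)
      omega
    · have h1 : cycS (g (ν k)) (g (ν k + 1)) := hk ▸ hfl m hmF
      have h2 : simR (g (ν k + 1)) (g (ν (k + 1))) :=
        hsimchain _ _ (hνlt k) (fun m' hm1 hm2 => hgap k m' (by omega) hm2)
      exact hcompS _ _ _ h1 h2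

/-- components of the zone list -/
theorem getD_middle {γ : Type*} (Zl : List γ) (z d : γ) (Zr : List γ) :
    (Zl ++ z :: Zr).getD Zl.length d = z := by
  rw [List.getD_append_right _ _ _ _ (le_refl _)]
  simp

theorem getD_other {γ : Type*} (Zl : List γ) (z z' d : γ) (Zr : List γ) {i : ℕ}
    (hi : i ≠ Zl.length) :
    (Zl ++ z :: Zr).getD i d = (Zl ++ z' :: Zr).getD i d := by
  rcases Nat.lt_or_ge i Zl.length with h | h
  · rw [List.getD_append _ _ _ _ h, List.getD_append _ _ _ _ h]
  · have h' : Zl.length < i := by omega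
    rw [List.getD_append_right _ _ _ _ (by omega), List.getD_append_right _ _ _ _ (by omega)]
    have : i - Zl.length = (i - Zl.length - 1) + 1 := by omega
    rw [this]
    simp
/-! ### Section 8: soundness -/

theorem soundness {R S : Set (List α × List α)} (hSR : S ⊆ R) (hne : ∀ p ∈ R, p.1 ≠ [])
    (s : ℕ → List (ShiftSym α))
    (hstep : ∀ n, Step (shiftSRS R) (s n) (s (n + 1)))
    (hinf : {n | Step { p : List (ShiftSym α) × List (ShiftSym α) |
        ∃ l r, (l, r) ∈ S ∧ p = (symL :: l.map ca, symD :: r.map ca) } (s n) (s (n + 1))}.Infinite) :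
    ∃ f : ℕ → List α, (∀ n, CycleStep R (f n) (f (n + 1))) ∧
      {n | CycleStep S (f n) (f (n + 1))}.Infinite := by
  classical
  set Fl : Set ℕ := {n | Step { p : List (ShiftSym α) × List (ShiftSym α) |
      ∃ l r, (l, r) ∈ S ∧ p = (symL :: l.map ca, symD :: r.map ca) } (s n) (s (n + 1))} with hFl
  have hrec : ∀ n, ∃ Zl z z' Zr,
      zones (s n) = Zl ++ z :: Zr ∧ zones (s (n + 1)) = Zl ++ z' :: Zr ∧
      taint z' ≤ taint z ∧
      (Sim (dec z) (dec z') ∨ taint z' < taint z ∨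
        ∃ l r, (l, r) ∈ R ∧ Cyc1 l r (dec z) (dec z')) ∧
      (n ∈ Fl → ∃ l r, (l, r) ∈ S ∧ Cyc1 l r (dec z) (dec z')) := by
    intro n
    by_cases hn : n ∈ Fl
    · obtain ⟨u, v, lhs, rhs, hm, e1, e2⟩ := hn
      obtain ⟨l, r, hlrS, hp⟩ := hm
      simp only [Prod.mk.injEq] at hp
      obtain ⟨rfl, rfl⟩ := hp
      obtain ⟨Zl, z, z', Zr, f1, f2, f3, f4⟩ := master_H (hne _ (hSR hlrS)) u v
      rw [e1, e2]
      exact ⟨Zl, z, z', Zr, f1, f2, f3,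
        Or.inr (Or.inr ⟨l, r, hSR hlrS, f4⟩), fun _ => ⟨l, r, hlrS, f4⟩⟩
    · obtain ⟨u, v, lhs, rhs, hm, e1, e2⟩ := hstep n
      obtain ⟨Zl, z, z', Zr, f1, f2, f3, f4⟩ := master hne hm u v
      rw [e1, e2]
      exact ⟨Zl, z, z', Zr, f1, f2, f3, f4, fun h => absurd h hn⟩
  choose Zl z z' Zr h1 h2 h3 h4 h5 using hrec
  set K := (zones (s 0)).length with hK
  have hlen : ∀ n, (zones (s n)).length = K := by
    intro n
    induction n with
    | zero => rfl
    | succ n ih =>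
      rw [h2 n, ← ih, h1 n]
      simp
  have hj : ∀ n, (Zl n).length < K := by
    intro n
    have := hlen n
    rw [h1 n] at this
    simp at this
    omega
  obtain ⟨i, hiK, hA⟩ := pigeonhole_infinite Fl hinf (fun n => (Zl n).length) K
    (fun n _ => hj n)
  set g : ℕ → List α := fun n => dec ((zones (s n)).getD i []) with hg
  set τ : ℕ → ℕ := fun n => taint ((zones (s n)).getD i []) with hτdef
  -- behaviour of the i-th component
  have hmid : ∀ n, (Zl n).length = i →
      (zones (s n)).getD i [] = z n ∧ (zones (s (n + 1))).getD i [] = z' n := by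
    intro n hn
    constructor
    · rw [h1 n, ← hn]; exact getD_middle _ _ _ _
    · rw [h2 n, ← hn]; exact getD_middle _ _ _ _
  have hoth : ∀ n, (Zl n).length ≠ i →
      (zones (s (n + 1))).getD i [] = (zones (s n)).getD i [] := by
    intro n hn
    rw [h1 n, h2 n]
    exact (getD_other _ _ _ _ _ (fun h => hn h.symm)).symm
  have hτ : ∀ n, τ (n + 1) ≤ τ n := by
    intro n
    by_cases hn : (Zl n).length = i
    · obtain ⟨e1, e2⟩ := hmid n hn
      simp only [hτdef, e1, e2]
      exact h3 n
    · simp only [hτdef, hoth n hn]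
      exact le_rfl
  obtain ⟨n₀, hn₀⟩ := antitone_eventually_const τ hτ
  have hnostrict : ∀ n, n₀ ≤ n → ¬ τ (n + 1) < τ n := by
    intro n hn
    rw [hn₀ n hn, hn₀ (n + 1) (by omega)]
    omega
  -- shifted sequence
  set g' : ℕ → List α := fun k => g (n₀ + k) with hg'
  set C : Set ℕ := {k | CycleStep R (g' k) (g' (k + 1))} with hC
  set F : Set ℕ := {k | (n₀ + k) ∈ Fl ∧ (Zl (n₀ + k)).length = i} with hF
  have hstep' : ∀ k, (k ∈ C → CycleStep R (g' k) (g' (k + 1))) ∧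
      (k ∉ C → Sim (g' k) (g' (k + 1))) := by
    intro k
    refine ⟨fun hk => hk, fun hk => ?_⟩
    set n := n₀ + k with hn
    have hsucc : n₀ + (k + 1) = n + 1 := by omega
    by_cases hzn : (Zl n).length = i
    · obtain ⟨e1, e2⟩ := hmid n hzn
      rcases h4 n with hsim | hstrict | ⟨l, r, hlr, w, hw1, hw2⟩
      · simpa only [hg', hg, hsucc, ← hn, e1, e2] using hsim
      · exact absurd (by simpa only [hτdef, e1, e2] using hstrict)
          (hnostrict n (by omega))
      · exfalso
        apply hk
        show CycleStep R (g' k) (g' (k + 1))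
        refine ⟨l, r, w, hlr, ?_, ?_⟩
        · simpa only [hg', hg, ← hn, e1] using hw1
        · simpa only [hg', hg, hsucc, e2] using hw2
    · have := hoth n hzn
      simp only [hg', hg, hsucc, this]
      exact Sim.refl _
  have hFC : F ⊆ C := by
    rintro k ⟨hkF, hki⟩
    obtain ⟨l, r, hlr, w, hw1, hw2⟩ := h5 _ hkF
    obtain ⟨e1, e2⟩ := hmid _ hki
    show CycleStep R (g' k) (g' (k + 1))
    have hsucc : n₀ + (k + 1) = (n₀ + k) + 1 := by omega
    refine ⟨l, r, w, hSR hlr, ?_, ?_⟩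
    · simpa only [hg', hg, e1] using hw1
    · simpa only [hg', hg, hsucc, e2] using hw2
  have hFinf : F.Infinite := by
    rw [hF, nat_infinite_iff]
    intro N
    rw [nat_infinite_iff] at hA
    obtain ⟨n, hn1, hn2, hn3⟩ := hA (n₀ + N)
    refine ⟨n - n₀, by omega, ?_⟩
    have hsub : n₀ + (n - n₀) = n := by omega
    rw [hsub]
    exact ⟨hn2, hn3⟩
  have hfl : ∀ k ∈ F, CycleStep S (g' k) (g' (k + 1)) := by
    rintro k ⟨hkF, hki⟩
    obtain ⟨l, r, hlr, w, hw1, hw2⟩ := h5 _ hkF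
    obtain ⟨e1, e2⟩ := hmid _ hki
    have hsucc : n₀ + (k + 1) = (n₀ + k) + 1 := by omega
    refine ⟨l, r, w, hlr, ?_, ?_⟩
    · simpa only [hg', hg, e1] using hw1
    · simpa only [hg', hg, hsucc, e2] using hw2
  exact extract_cycle_sequence g' C F Sim (CycleStep R) (CycleStep S)
    (fun x y z => CycleStep.sim_right) (fun x y z => CycleStep.sim_right)
    Sim.refl (fun x y z => Sim.trans) hstep' hFC hFinf hfl
/-! ### Section 9: stitching finite chains into an infinite sequence -/

theorem chain_getD {β : Type*} [Inhabited β] {r : β → β → Prop} :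
    ∀ {l : List β} {a : β}, List.Chain r a l → ∀ k, k + 1 < (a :: l).length →
      r ((a :: l).getD k default) ((a :: l).getD (k + 1) default) := by
  intro l
  induction l with
  | nil => intro a _ k hk; simp at hk
  | cons b t ih =>
    intro a hch k hk
    rcases List.chain_cons.mp hch with ⟨hab, hbt⟩
    cases k with
    | zero => simpa using hab
    | succ k =>
      have := ih hbt k (by simpa using hk)
      simpa using this

theorem getD_last {β : Type*} [Inhabited β] (a : β) (xs : List β) (y : β) :
    ((a :: (xs ++ [y])).getD (xs.length + 1) default) = y := by
  have : a :: (xs ++ [y]) = (a :: xs) ++ [y] := by simp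
  rw [this, List.getD_append_right _ _ _ _ (by simp)]
  simp

theorem stitch {β : Type*} [Inhabited β] (r1 r2 : β → β → Prop) (c : ℕ → β) (seg : ℕ → List β)
    (hch : ∀ n, List.Chain r2 (c n) (seg n ++ [c (n + 1)]))
    (flag : Set ℕ) (hflag : flag.Infinite)
    (hf : ∀ n ∈ flag, r1 (c n) ((seg n ++ [c (n + 1)]).headI)) :
    ∃ f : ℕ → β, (∀ n, r2 (f n) (f (n + 1))) ∧ {n | r1 (f n) (f (n + 1))}.Infinite := by
  classical
  set L : ℕ → List β := fun n => c n :: (seg n ++ [c (n + 1)]) with hL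
  have hlenL : ∀ n, (L n).length = (seg n).length + 2 := by intro n; simp [hL]
  set pos : ℕ → ℕ := fun n => Nat.rec 0 (fun m prev => prev + (seg m).length + 1) n with hpos
  have hpos0 : pos 0 = 0 := rfl
  have hposS : ∀ n, pos (n + 1) = pos n + (seg n).length + 1 := fun n => rfl
  have hposlt : ∀ n, pos n < pos (n + 1) := by intro n; rw [hposS]; omega
  have hposmono : StrictMono pos := strictMono_nat_of_lt_succ hposlt
  have hposge : ∀ n, n ≤ pos n := by
    intro n
    induction n with
    | zero => omega
    | succ n ih => rw [hposS]; omega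
  set m : ℕ → ℕ := fun i => Nat.findGreatest (fun k => pos k ≤ i) i with hm
  have hm1 : ∀ i, pos (m i) ≤ i := by
    intro i
    have h := Nat.findGreatest_spec (P := fun k => pos k ≤ i) (m := 0) (Nat.zero_le i)
      (by simp [hpos0])
    simpa [hm] using h
  have hm2 : ∀ i, i < pos (m i + 1) := by
    intro i
    rcases Nat.lt_or_ge i (m i + 1) with h | h
    · have := hposge (m i + 1); omega
    · by_contra hcon
      push_neg at hcon
      have hg := Nat.findGreatest_is_greatest (P := fun k => pos k ≤ i) (n := i)
        (show Nat.findGreatest (fun k => pos k ≤ i) i < m i + 1 by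
          simp only [hm]; exact Nat.lt_succ_self _) h
      exact hg hcon
  have hmwin : ∀ n i, pos n ≤ i → i < pos (n + 1) → m i = n := by
    intro n i hi1 hi2
    have hge : n ≤ m i := Nat.le_findGreatest (le_trans (hposge n) hi1) hi1
    rcases Nat.lt_or_ge (m i) (n + 1) with h | h
    · omega
    · exfalso
      have := hposmono.le_iff_le.mpr (show n + 1 ≤ m i by omega)
      have := hm1 i
      omega
  set f : ℕ → β := fun i => (L (m i)).getD (i - pos (m i)) default with hfdef
  have hwinval : ∀ n i, pos n ≤ i → i < pos (n + 1) → f i = (L n).getD (i - pos n) default := by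
    intro n i h1 h2
    simp only [hfdef, hmwin n i h1 h2]
  have hstepf : ∀ i, r2 (f i) (f (i + 1)) ∧
      (m i = i - pos (m i) + pos (m i) → True) := by
    intro i
    refine ⟨?_, fun _ => trivial⟩
    set n := m i with hn
    have h1 : pos n ≤ i := hm1 i
    have h2 : i < pos (n + 1) := hm2 i
    have hfi : f i = (L n).getD (i - pos n) default := hwinval n i h1 h2
    have hkey : r2 ((L n).getD (i - pos n) default) ((L n).getD (i - pos n + 1) default) := by
      apply chain_getD (hch n)
      rw [hlenL]
      rw [hposS] at h2
      omega
    have hfi1 : f (i + 1) = (L n).getD (i - pos n + 1) default := by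
      rcases Nat.lt_or_ge (i + 1) (pos (n + 1)) with h3 | h3
      · rw [hwinval n (i + 1) (by omega) h3]
        congr 1
        omega
      · have hip : i + 1 = pos (n + 1) := by rw [hposS] at h2 h3 ⊢; omega
        have : f (i + 1) = (L (n + 1)).getD 0 default := by
          rw [hwinval (n + 1) (i + 1) (by omega) (by rw [hip]; exact hposlt (n + 1))]
          rw [hip]
          simp
        rw [this]
        have hidx : i - pos n + 1 = (seg n).length + 1 := by rw [hposS] at hip; omega
        rw [hidx]
        have : (L (n + 1)).getD 0 default = c (n + 1) := by simp [hL]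
        rw [this, hL]
        exact (getD_last _ _ _).symm
    rw [hfi, hfi1]
    exact hkey
  refine ⟨f, fun i => (hstepf i).1, ?_⟩
  rw [nat_infinite_iff]
  intro N
  obtain ⟨n, hnf, hngt⟩ := hflag.exists_gt N
  refine ⟨pos n, by have := hposge n; omega, ?_⟩
  have hfi : f (pos n) = c n := by
    rw [hwinval n (pos n) (le_refl _) (hposlt n)]
    simp [hL]
  have hfi1 : f (pos n + 1) = (seg n ++ [c (n + 1)]).headI := by
    rcases Nat.lt_or_ge (pos n + 1) (pos (n + 1)) with h3 | h3
    · rw [hwinval n (pos n + 1) (by omega) h3]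
      have : pos n + 1 - pos n = 1 := by omega
      rw [this]
      rcases hseg : seg n with _ | ⟨b, t⟩
      · exfalso; rw [hposS, hseg] at h3; simp at h3
      · simp [hL, hseg]
    · have hip : pos n + 1 = pos (n + 1) := by have := hposlt n; omega
      have : f (pos n + 1) = c (n + 1) := by
        rw [hwinval (n + 1) (pos n + 1) (by omega) (by rw [hip]; exact hposlt (n + 1))]
        rw [hip]
        simp [hL]
      rw [this]
      have hseg0 : (seg n).length = 0 := by rw [hposS] at hip; omega
      rcases hseg : seg n with _ | ⟨b, t⟩
      · simp
      · rw [hseg] at hseg0; simp at hseg0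
  show r1 (f (pos n)) (f (pos n + 1))
  rw [hfi, hfi1]
  exact hf n hnf
/-! ### Section 10: simulation of cycle steps by shift-strings -/

section Simulation

variable {R : Set (List α × List α)}

theorem memA : (([symB], symW :: (List.replicate (lenSRS R - 1) symM ++ [symV]))
    : List (ShiftSym α) × List (ShiftSym α)) ∈ shiftSRS R := Or.inl rfl

theorem memB : (([symM], []) : List (ShiftSym α) × List (ShiftSym α)) ∈ shiftSRS R :=
  Or.inr (Or.inl rfl)

theorem memC (a : α) : (([symM, symV, ca a], [symV, cb a])
    : List (ShiftSym α) × List (ShiftSym α)) ∈ shiftSRS R :=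
  Or.inr (Or.inr (Or.inl ⟨a, rfl⟩))

theorem memD (a b : α) : (([cb b, ca a], [ca a, cb b])
    : List (ShiftSym α) × List (ShiftSym α)) ∈ shiftSRS R :=
  Or.inr (Or.inr (Or.inr (Or.inl ⟨a, b, rfl⟩)))

theorem memE (b : α) : (([cb b, symE], [ca b, symE])
    : List (ShiftSym α) × List (ShiftSym α)) ∈ shiftSRS R :=
  Or.inr (Or.inr (Or.inr (Or.inr (Or.inl ⟨b, rfl⟩))))

theorem memF : (([symW, symV], [symR, symL]) : List (ShiftSym α) × List (ShiftSym α))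
    ∈ shiftSRS R :=
  Or.inr (Or.inr (Or.inr (Or.inr (Or.inr (Or.inl rfl)))))

theorem memG (a : α) : (([symL, ca a], [cc a, symL])
    : List (ShiftSym α) × List (ShiftSym α)) ∈ shiftSRS R :=
  Or.inr (Or.inr (Or.inr (Or.inr (Or.inr (Or.inr (Or.inl ⟨a, rfl⟩))))))

theorem memH {l r : List α} (h : (l, r) ∈ R) :
    ((symL :: l.map ca, symD :: r.map ca) : List (ShiftSym α) × List (ShiftSym α))
    ∈ shiftSRS R :=
  Or.inr (Or.inr (Or.inr (Or.inr (Or.inr (Or.inr (Or.inr (Or.inl ⟨l, r, h, rfl⟩)))))))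

theorem memI (c : α) : (([cc c, symD], [symD, ca c])
    : List (ShiftSym α) × List (ShiftSym α)) ∈ shiftSRS R :=
  Or.inr (Or.inr (Or.inr (Or.inr (Or.inr (Or.inr (Or.inr (Or.inr (Or.inl ⟨c, rfl⟩))))))))

theorem memJ : (([symR, symD], [symB]) : List (ShiftSym α) × List (ShiftSym α))
    ∈ shiftSRS R :=
  Or.inr (Or.inr (Or.inr (Or.inr (Or.inr (Or.inr (Or.inr (Or.inr (Or.inr rfl))))))))

theorem mkStep {T : Set (List (ShiftSym α) × List (ShiftSym α))} {lhs rhs : List (ShiftSym α)}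
    (hm : (lhs, rhs) ∈ T) (u v : List (ShiftSym α)) :
    Step T (u ++ lhs ++ v) (u ++ rhs ++ v) := ⟨u, v, lhs, rhs, hm, rfl, rfl⟩

local notation "rtg" => Relation.ReflTransGen (Step (shiftSRS R))

theorem delM (j : ℕ) (u v : List (ShiftSym α)) :
    rtg (u ++ List.replicate j symM ++ v) (u ++ v) := by
  induction j with
  | zero => simp [Relation.ReflTransGen.refl]
  | succ j ih =>
    refine Relation.ReflTransGen.head ?_ ih
    have h := mkStep (memB (R := R)) u (List.replicate j symM ++ v)
    simpa [List.replicate_succ] using h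

theorem pushB (p : List α) (a : α) (u v : List (ShiftSym α)) :
    rtg (u ++ [cb a] ++ p.map ca ++ v) (u ++ p.map ca ++ [cb a] ++ v) := by
  induction p generalizing u with
  | nil => simp [Relation.ReflTransGen.refl]
  | cons x t ih =>
    have h1 : Step (shiftSRS R) (u ++ [cb a] ++ (x :: t).map ca ++ v)
        ((u ++ [ca x]) ++ [cb a] ++ t.map ca ++ v) := by
      have h := mkStep (memD (R := R) x a) u (t.map ca ++ v)
      have e1 : u ++ [cb a] ++ (x :: t).map ca ++ v = u ++ [cb a, ca x] ++ (t.map ca ++ v) := by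
        simp
      have e2 : (u ++ [ca x]) ++ [cb a] ++ t.map ca ++ v
          = u ++ [ca x, cb a] ++ (t.map ca ++ v) := by simp
      rw [e1, e2]
      exact h
    have h2 := ih (u ++ [ca x])
    refine Relation.ReflTransGen.head h1 ?_
    have e3 : (u ++ [ca x]) ++ t.map ca ++ [cb a] ++ v = u ++ (x :: t).map ca ++ [cb a] ++ v := by
      simp
    rw [← e3]
    exact h2

theorem scanG (x : List α) (u v : List (ShiftSym α)) :
    rtg (u ++ [symL] ++ x.map ca ++ v) (u ++ x.map cc ++ [symL] ++ v) := by
  induction x generalizing u with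
  | nil => simp [Relation.ReflTransGen.refl]
  | cons a t ih =>
    have h1 : Step (shiftSRS R) (u ++ [symL] ++ (a :: t).map ca ++ v)
        ((u ++ [cc a]) ++ [symL] ++ t.map ca ++ v) := by
      have h := mkStep (memG (R := R) a) u (t.map ca ++ v)
      have e1 : u ++ [symL] ++ (a :: t).map ca ++ v = u ++ [symL, ca a] ++ (t.map ca ++ v) := by
        simp
      have e2 : (u ++ [cc a]) ++ [symL] ++ t.map ca ++ v
          = u ++ [cc a, symL] ++ (t.map ca ++ v) := by simp
      rw [e1, e2]
      exact h
    have h2 := ih (u ++ [cc a])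
    refine Relation.ReflTransGen.head h1 ?_
    have e3 : (u ++ [cc a]) ++ t.map cc ++ [symL] ++ v = u ++ (a :: t).map cc ++ [symL] ++ v := by
      simp
    rw [← e3]
    exact h2

theorem retI (x : List α) (u v : List (ShiftSym α)) :
    rtg (u ++ x.map cc ++ [symD] ++ v) (u ++ [symD] ++ x.map ca ++ v) := by
  induction x using List.reverseRecOn generalizing v with
  | nil => simp [Relation.ReflTransGen.refl]
  | append_singleton t c ih =>
    have h1 : Step (shiftSRS R) (u ++ (t ++ [c]).map cc ++ [symD] ++ v)
        (u ++ t.map cc ++ [symD] ++ (ca c :: v)) := by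
      have h := mkStep (memI (R := R) c) (u ++ t.map cc) v
      have e1 : u ++ (t ++ [c]).map cc ++ [symD] ++ v
          = (u ++ t.map cc) ++ [cc c, symD] ++ v := by simp
      have e2 : u ++ t.map cc ++ [symD] ++ (ca c :: v)
          = (u ++ t.map cc) ++ [symD, ca c] ++ v := by simp
      rw [e1, e2]
      exact h
    have h2 := ih (ca c :: v)
    refine Relation.ReflTransGen.head h1 ?_
    have e3 : u ++ [symD] ++ t.map ca ++ (ca c :: v)
        = u ++ [symD] ++ (t ++ [c]).map ca ++ v := by simp
    rw [← e3]
    exact h2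

theorem rotOne (j : ℕ) (a : α) (t : List α) :
    rtg ([symW] ++ List.replicate (j + 1) symM ++ [symV] ++ (a :: t).map ca ++ [symE])
        ([symW] ++ List.replicate j symM ++ [symV] ++ (t ++ [a]).map ca ++ [symE]) := by
  have s1 : Step (shiftSRS R)
      ([symW] ++ List.replicate (j + 1) symM ++ [symV] ++ (a :: t).map ca ++ [symE])
      ([symW] ++ List.replicate j symM ++ [symV, cb a] ++ t.map ca ++ [symE]) := by
    have h := mkStep (memC (R := R) a) ([symW] ++ List.replicate j symM) (t.map ca ++ [symE])
    have e1 : [symW] ++ List.replicate (j + 1) symM ++ [symV] ++ (a :: t).map ca ++ [symE]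
        = ([symW] ++ List.replicate j symM) ++ [symM, symV, ca a] ++ (t.map ca ++ [symE]) := by
      simp [List.replicate_succ']
    have e2 : [symW] ++ List.replicate j symM ++ [symV, cb a] ++ t.map ca ++ [symE]
        = ([symW] ++ List.replicate j symM) ++ [symV, cb a] ++ (t.map ca ++ [symE]) := by
      simp
    rw [e1, e2]
    exact h
  have s2 : rtg ([symW] ++ List.replicate j symM ++ [symV, cb a] ++ t.map ca ++ [symE])
      ([symW] ++ List.replicate j symM ++ [symV] ++ t.map ca ++ [cb a] ++ [symE]) := by
    have h := pushB (R := R) t a ([symW] ++ List.replicate j symM ++ [symV]) [symE]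
    have e1 : [symW] ++ List.replicate j symM ++ [symV, cb a] ++ t.map ca ++ [symE]
        = ([symW] ++ List.replicate j symM ++ [symV]) ++ [cb a] ++ t.map ca ++ [symE] := by simp
    have e2 : [symW] ++ List.replicate j symM ++ [symV] ++ t.map ca ++ [cb a] ++ [symE]
        = ([symW] ++ List.replicate j symM ++ [symV]) ++ t.map ca ++ [cb a] ++ [symE] := by simp
    rw [e1, e2]
    exact h
  have s3 : Step (shiftSRS R)
      ([symW] ++ List.replicate j symM ++ [symV] ++ t.map ca ++ [cb a] ++ [symE])
      ([symW] ++ List.replicate j symM ++ [symV] ++ (t ++ [a]).map ca ++ [symE]) := by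
    have h := mkStep (memE (R := R) a)
      ([symW] ++ List.replicate j symM ++ [symV] ++ t.map ca) []
    have e1 : [symW] ++ List.replicate j symM ++ [symV] ++ t.map ca ++ [cb a] ++ [symE]
        = ([symW] ++ List.replicate j symM ++ [symV] ++ t.map ca) ++ [cb a, symE] ++ [] := by
      simp
    have e2 : [symW] ++ List.replicate j symM ++ [symV] ++ (t ++ [a]).map ca ++ [symE]
        = ([symW] ++ List.replicate j symM ++ [symV] ++ t.map ca) ++ [ca a, symE] ++ [] := by
      simp
    rw [e1, e2]
    exact h
  exact Relation.ReflTransGen.head s1 (s2.trans (Relation.ReflTransGen.single s3))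

theorem rotMany (p : List α) (j : ℕ) (t : List α) :
    rtg ([symW] ++ List.replicate (j + p.length) symM ++ [symV] ++ (p ++ t).map ca ++ [symE])
        ([symW] ++ List.replicate j symM ++ [symV] ++ (t ++ p).map ca ++ [symE]) := by
  induction p generalizing t with
  | nil => simp [Relation.ReflTransGen.refl]
  | cons a p ih =>
    have h1 : rtg ([symW] ++ List.replicate (j + (a :: p).length) symM ++ [symV]
          ++ ((a :: p) ++ t).map ca ++ [symE])
        ([symW] ++ List.replicate (j + p.length) symM ++ [symV]
          ++ ((p ++ t) ++ [a]).map ca ++ [symE]) := by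
      have h := rotOne (R := R) (j + p.length) a (p ++ t)
      have e1 : j + (a :: p).length = j + p.length + 1 := by simp; omega
      have e2 : ((a :: p) ++ t) = (a :: (p ++ t)) := by simp
      rw [e1, e2]
      exact h
    have h2 := ih (t ++ [a])
    have e3 : (p ++ t) ++ [a] = p ++ (t ++ [a]) := by simp
    have e4 : (t ++ [a]) ++ p = t ++ (a :: p) := by simp
    rw [e3] at h1
    rw [e4] at h2
    exact h1.trans h2

/-- the middle part of a round : from `W V x l y E` through the H-step to `B (x r y) E` -/
theorem midRound {l r : List α} (hlr : (l, r) ∈ R) (x y : List α) :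
    ∃ a b : List (ShiftSym α),
      rtg ([symW, symV] ++ (x ++ l ++ y).map ca ++ [symE]) a ∧
      (∃ u v, a = u ++ (symL :: l.map ca) ++ v ∧ b = u ++ (symD :: r.map ca) ++ v) ∧
      rtg b (symB :: (x ++ r ++ y).map ca ++ [symE]) := by
  refine ⟨[symR] ++ x.map cc ++ [symL] ++ l.map ca ++ y.map ca ++ [symE],
    [symR] ++ x.map cc ++ [symD] ++ r.map ca ++ y.map ca ++ [symE],
    ?_, ⟨[symR] ++ x.map cc, y.map ca ++ [symE], by simp, by simp⟩, ?_⟩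
  · have s1 : Step (shiftSRS R) ([symW, symV] ++ (x ++ l ++ y).map ca ++ [symE])
        ([symR, symL] ++ (x ++ l ++ y).map ca ++ [symE]) := by
      have h := mkStep (memF (R := R)) [] ((x ++ l ++ y).map ca ++ [symE])
      simpa using h
    have s2 : rtg ([symR, symL] ++ (x ++ l ++ y).map ca ++ [symE])
        ([symR] ++ x.map cc ++ [symL] ++ l.map ca ++ y.map ca ++ [symE]) := by
      have h := scanG (R := R) x [symR] ((l ++ y).map ca ++ [symE])
      have e1 : [symR, symL] ++ (x ++ l ++ y).map ca ++ [symE]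
          = [symR] ++ [symL] ++ x.map ca ++ ((l ++ y).map ca ++ [symE]) := by simp
      have e2 : [symR] ++ x.map cc ++ [symL] ++ l.map ca ++ y.map ca ++ [symE]
          = [symR] ++ x.map cc ++ [symL] ++ ((l ++ y).map ca ++ [symE]) := by simp
      rw [e1, e2]
      exact h
    exact Relation.ReflTransGen.head s1 s2
  · have s3 : rtg ([symR] ++ x.map cc ++ [symD] ++ r.map ca ++ y.map ca ++ [symE])
        ([symR] ++ [symD] ++ x.map ca ++ (r.map ca ++ y.map ca ++ [symE])) := by
      have h := retI (R := R) x [symR] (r.map ca ++ y.map ca ++ [symE])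
      have e1 : [symR] ++ x.map cc ++ [symD] ++ r.map ca ++ y.map ca ++ [symE]
          = [symR] ++ x.map cc ++ [symD] ++ (r.map ca ++ y.map ca ++ [symE]) := by simp
      rw [e1]
      exact h
    have s4 : Step (shiftSRS R) ([symR] ++ [symD] ++ x.map ca ++ (r.map ca ++ y.map ca ++ [symE]))
        (symB :: (x ++ r ++ y).map ca ++ [symE]) := by
      have h := mkStep (memJ (R := R)) [] (x.map ca ++ (r.map ca ++ y.map ca ++ [symE]))
      have e1 : [symR] ++ [symD] ++ x.map ca ++ (r.map ca ++ y.map ca ++ [symE])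
          = [] ++ [symR, symD] ++ (x.map ca ++ (r.map ca ++ y.map ca ++ [symE])) := by simp
      have e2 : symB :: (x ++ r ++ y).map ca ++ [symE]
          = [] ++ [symB] ++ (x.map ca ++ (r.map ca ++ y.map ca ++ [symE])) := by simp
      rw [e1, e2]
      exact h
    exact s3.trans (Relation.ReflTransGen.single s4)

end Simulation
/-! ### Section 11: the full simulation round -/

section Round

variable {R : Set (List α × List α)}

local notation "rtg" => Relation.ReflTransGen (Step (shiftSRS R))

theorem length_le_lenSRS (hfin : R.Finite) {l r : List α} (hlr : (l, r) ∈ R) :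
    l.length ≤ lenSRS R :=
  le_csSup ((hfin.image _).bddAbove) ⟨(l, r), hlr, rfl⟩

theorem stepA_chain (zz : List α) :
    Step (shiftSRS R) (symB :: zz.map ca ++ [symE])
      ([symW] ++ List.replicate (lenSRS R - 1) symM ++ [symV] ++ zz.map ca ++ [symE]) := by
  have h := mkStep (memA (R := R)) [] (zz.map ca ++ [symE])
  have e1 : symB :: zz.map ca ++ [symE] = [] ++ [symB] ++ (zz.map ca ++ [symE]) := by simp
  have e2 : [symW] ++ List.replicate (lenSRS R - 1) symM ++ [symV] ++ zz.map ca ++ [symE]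
      = [] ++ (symW :: (List.replicate (lenSRS R - 1) symM ++ [symV])) ++ (zz.map ca ++ [symE]) := by
    simp
  rw [e1, e2]
  exact h

theorem contig_round {l r : List α} (hlr : (l, r) ∈ R) (x y : List α) :
    ∃ a b : List (ShiftSym α),
      rtg (symB :: (x ++ l ++ y).map ca ++ [symE]) a ∧
      (∃ u v, a = u ++ (symL :: l.map ca) ++ v ∧ b = u ++ (symD :: r.map ca) ++ v) ∧
      rtg b (symB :: (x ++ r ++ y).map ca ++ [symE]) := by
  obtain ⟨a, b, m1, m2, m3⟩ := midRound hlr x y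
  refine ⟨a, b, ?_, m2, m3⟩
  refine Relation.ReflTransGen.head (stepA_chain _) (Relation.ReflTransGen.trans ?_ m1)
  have h := delM (R := R) (lenSRS R - 1) [symW] ([symV] ++ (x ++ l ++ y).map ca ++ [symE])
  have e1 : [symW] ++ List.replicate (lenSRS R - 1) symM ++ [symV] ++ (x ++ l ++ y).map ca ++ [symE]
      = [symW] ++ List.replicate (lenSRS R - 1) symM ++ ([symV] ++ (x ++ l ++ y).map ca ++ [symE]) := by
    simp
  have e2 : [symW, symV] ++ (x ++ l ++ y).map ca ++ [symE]
      = [symW] ++ ([symV] ++ (x ++ l ++ y).map ca ++ [symE]) := by simp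
  rw [e1, e2]
  exact h

theorem sim_round (hfin : R.Finite) {l r w zz : List α} (hlr : (l, r) ∈ R) (hl : l ≠ [])
    (hz : Sim (l ++ w) zz) :
    ∃ z' a b, Sim (r ++ w) z' ∧
      rtg (symB :: zz.map ca ++ [symE]) a ∧
      (∃ u v, a = u ++ (symL :: l.map ca) ++ v ∧ b = u ++ (symD :: r.map ca) ++ v) ∧
      rtg b (symB :: z'.map ca ++ [symE]) := by
  obtain ⟨t₁, t₂, he, hzz⟩ := hz
  rcases le_or_gt l.length t₁.length with hle | hlt
  · -- l is a prefix of t₁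
    have hp1 : l <+: t₁ ++ t₂ := he ▸ List.prefix_append l w
    obtain ⟨t₁', rfl⟩ := List.prefix_of_prefix_length_le hp1 (List.prefix_append t₁ t₂) hle
    have hw : w = t₁' ++ t₂ := by
      have := he
      rw [List.append_assoc] at this
      exact (List.append_cancel_left this)
    obtain ⟨a, b, m1, m2, m3⟩ := contig_round hlr t₂ t₁'
    refine ⟨t₂ ++ r ++ t₁', a, b, ?_, ?_, m2, ?_⟩
    · refine ⟨r ++ t₁', t₂, ?_, ?_⟩
      · rw [hw]; simp
      · simp
    · have e : zz = t₂ ++ l ++ t₁' := by rw [hzz]; simp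
      rw [e]
      exact m1
    · exact m3
  · -- t₁ is a proper prefix of l
    rcases eq_or_ne t₁ [] with rfl | ht₁
    · -- no rotation needed
      simp at hzz
      have hzz' : zz = l ++ w := by rw [hzz]; simpa using he.symm
      obtain ⟨a, b, m1, m2, m3⟩ := contig_round hlr [] w
      refine ⟨r ++ w, a, b, Sim.refl _, ?_, m2, ?_⟩
      · have e : ([] ++ l ++ w) = zz := by rw [hzz']; simp
        rw [← e]
        exact m1
      · have e : ([] ++ r ++ w) = r ++ w := by simp
        rw [← e]
        exact m3
    · -- rotate l₂ = drop |t₁| l to the back first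
      have hp1 : t₁ <+: l ++ w := he.symm ▸ List.prefix_append t₁ t₂
      obtain ⟨l₂, rfl⟩ := List.prefix_of_prefix_length_le hp1 (List.prefix_append l w)
        (by omega)
      have ht₂ : t₂ = l₂ ++ w := by
        have := he
        rw [List.append_assoc] at this
        exact (List.append_cancel_left this).symm
      have hzz' : zz = l₂ ++ (w ++ t₁) := by rw [hzz, ht₂]; simp
      have hlen2 : l₂.length ≤ lenSRS R - 1 := by
        have h1 : (t₁ ++ l₂).length ≤ lenSRS R := length_le_lenSRS hfin hlr
        have h2 : 1 ≤ t₁.length := by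
          rcases t₁ with _ | ⟨c, t⟩
          · exact absurd rfl ht₁
          · simp
        simp at h1
        omega
      obtain ⟨a, b, m1, m2, m3⟩ := midRound (l := t₁ ++ l₂) hlr w []
      refine ⟨w ++ r, a, b, ⟨r, w, rfl, rfl⟩, ?_, m2, ?_⟩
      · -- B zz E →* W V (w ++ l) E →* a
        refine Relation.ReflTransGen.head (stepA_chain _) ?_
        have hrot := rotMany (R := R) l₂ (lenSRS R - 1 - l₂.length) (w ++ t₁)
        have ejj : lenSRS R - 1 - l₂.length + l₂.length = lenSRS R - 1 := by omega
        rw [ejj] at hrot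
        have e1 : zz.map ca = (l₂ ++ (w ++ t₁)).map ca := by rw [hzz']
        rw [e1]
        refine Relation.ReflTransGen.trans hrot ?_
        have hdel := delM (R := R) (lenSRS R - 1 - l₂.length) [symW]
          ([symV] ++ ((w ++ t₁) ++ l₂).map ca ++ [symE])
        have e2 : [symW] ++ List.replicate (lenSRS R - 1 - l₂.length) symM ++ [symV]
              ++ ((w ++ t₁) ++ l₂).map ca ++ [symE]
            = [symW] ++ List.replicate (lenSRS R - 1 - l₂.length) symM
              ++ ([symV] ++ ((w ++ t₁) ++ l₂).map ca ++ [symE]) := by simp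
        rw [e2]
        refine Relation.ReflTransGen.trans hdel ?_
        have e3 : [symW] ++ ([symV] ++ ((w ++ t₁) ++ l₂).map ca ++ [symE])
            = [symW, symV] ++ (w ++ (t₁ ++ l₂) ++ []).map ca ++ [symE] := by simp
        rw [e3]
        exact m1
      · have e : w ++ r ++ [] = w ++ r := by simp
        rw [← e]
        exact m3

end Round
/-! ### Section 12: completeness and the main theorem -/

theorem completeness {S R : Set (List α × List α)} (hSR : S ⊆ R) (hfin : R.Finite)
    (hne : ∀ p ∈ R, p.1 ≠ []) (f : ℕ → List α)
    (hstep : ∀ n, CycleStep R (f n) (f (n + 1)))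
    (hinf : {n | CycleStep S (f n) (f (n + 1))}.Infinite) :
    ∃ g : ℕ → List (ShiftSym α), (∀ n, Step (shiftSRS R) (g n) (g (n + 1))) ∧
      {n | Step { p : List (ShiftSym α) × List (ShiftSym α) |
        ∃ l r, (l, r) ∈ S ∧ p = (symL :: l.map ca, symD :: r.map ca) } (g n) (g (n + 1))}.Infinite := by
  classical
  set Fl : Set ℕ := {n | CycleStep S (f n) (f (n + 1))} with hFldef
  have hdata : ∀ n, ∃ l r w : List α, (l, r) ∈ R ∧ (n ∈ Fl → (l, r) ∈ S) ∧
      Sim (l ++ w) (f n) ∧ Sim (r ++ w) (f (n + 1)) := by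
    intro n
    by_cases hn : n ∈ Fl
    · obtain ⟨l, r, w, hm, h1, h2⟩ := hn
      exact ⟨l, r, w, hSR hm, fun _ => hm, h1, h2⟩
    · obtain ⟨l, r, w, hm, h1, h2⟩ := hstep n
      exact ⟨l, r, w, hm, fun h => absurd h hn, h1, h2⟩
  choose l r w hR hS hs1 hs2 using hdata
  have key : ∀ n (z : List α), Sim (f n) z →
      ∃ z', Sim (f (n + 1)) z' ∧
        ∃ a b, Relation.ReflTransGen (Step (shiftSRS R)) (symB :: z.map ca ++ [symE]) a ∧
          (∃ u v, a = u ++ (symL :: (l n).map ca) ++ v ∧ b = u ++ (symD :: (r n).map ca) ++ v) ∧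
          Relation.ReflTransGen (Step (shiftSRS R)) b (symB :: z'.map ca ++ [symE]) := by
    intro n z hz
    have hz' : Sim (l n ++ w n) z := (hs1 n).trans hz
    obtain ⟨z', a, b, hsim, c1, c2, c3⟩ := sim_round hfin (hR n) (hne _ (hR n)) hz'
    exact ⟨z', (hs2 n).symm.trans hsim, a, b, c1, c2, c3⟩
  set zf : ∀ n : ℕ, {z : List α // Sim (f n) z} := fun n =>
    Nat.rec ⟨f 0, Sim.refl _⟩
      (fun n zn => ⟨Classical.choose (key n zn.1 zn.2),
        (Classical.choose_spec (key n zn.1 zn.2)).1⟩) n with hzf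
  have hround : ∀ n, ∃ a b,
      Relation.ReflTransGen (Step (shiftSRS R)) (symB :: (zf n).1.map ca ++ [symE]) a ∧
      (∃ u v, a = u ++ (symL :: (l n).map ca) ++ v ∧ b = u ++ (symD :: (r n).map ca) ++ v) ∧
      Relation.ReflTransGen (Step (shiftSRS R)) b (symB :: (zf (n + 1)).1.map ca ++ [symE]) := by
    intro n
    exact (Classical.choose_spec (key n (zf n).1 (zf n).2)).2
  choose af bf hc1 hc2 hc3 using hround
  have hlist : ∀ n, ∃ L, List.Chain (Step (shiftSRS R)) (bf n) L ∧
      (bf n :: L).getLast (List.cons_ne_nil _ _) = af (n + 1) := by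
    intro n
    exact List.exists_isChain_cons_of_relationReflTransGen ((hc3 n).trans (hc1 (n + 1)))
  choose Lf hL1 hL2 using hlist
  set seg : ℕ → List (List (ShiftSym α)) := fun n => (bf n :: Lf n).dropLast with hseg
  have hlisteq : ∀ n, seg n ++ [af (n + 1)] = bf n :: Lf n := by
    intro n
    have := List.dropLast_append_getLast (l := bf n :: Lf n) (List.cons_ne_nil _ _)
    rw [hL2 n] at this
    exact this
  have hch : ∀ n, List.Chain (Step (shiftSRS R)) (af n) (seg n ++ [af (n + 1)]) := by
    intro n
    rw [hlisteq n]; show List.IsChain _ (af n :: bf n :: Lf n); rw [List.chain_cons]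
    constructor
    · obtain ⟨u, v, e1, e2⟩ := hc2 n
      exact ⟨u, v, _, _, memH (hR n), e1, e2⟩
    · exact hL1 n
  have hf : ∀ n ∈ Fl, Step { p : List (ShiftSym α) × List (ShiftSym α) |
      ∃ l r, (l, r) ∈ S ∧ p = (symL :: l.map ca, symD :: r.map ca) }
      (af n) ((seg n ++ [af (n + 1)]).headI) := by
    intro n hn
    rw [hlisteq n]
    obtain ⟨u, v, e1, e2⟩ := hc2 n
    exact ⟨u, v, _, _, ⟨l n, r n, hS n hn, rfl⟩, e1, e2⟩
  exact stitch _ _ af seg hch Fl hinf hf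

end CycleRewriting

namespace CycleRewriting

open ShiftSym in
/-- soundness and completeness of `shift_rel` for relative termination. -/
theorem shiftRel_sound_and_complete {α : Type*} [Finite α] (S R : Set (List α × List α))
    (hSR : S ⊆ R) (hfin : R.Finite) (hne : ∀ p ∈ R, p.1 ≠ []) :
    RelTerminating
        (Step { p : List (ShiftSym α) × List (ShiftSym α) |
                  ∃ l r, (l, r) ∈ S ∧ p = (symL :: l.map ca, symD :: r.map ca) })
        (Step (shiftSRS R)) ↔
      RelTerminating (CycleStep S) (CycleStep R) := by
  constructor
  · intro hL
    intro hcon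
    obtain ⟨f, h1, h2⟩ := hcon
    obtain ⟨g, hg1, hg2⟩ := completeness hSR hfin hne f h1 h2
    exact hL ⟨g, hg1, hg2⟩
  · intro hRterm
    rintro ⟨s, h1, h2⟩
    exact hRterm (soundness hSR hne s h1 h2)

end CycleRewriting
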